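/- arXiv:1902.05597 — 5 statements merged into one kernel-verified Lean document; each statement's English description precedes it below -/
import Mathlib

section
/- Let ℬ be a tiling of {0,1}ⁿ by boxes and let A ∈ ℬ be minimal with respect to the order A ⪯ B iff prop(A) ⊇ prop(B). If |prop(A)| ≥ 1, then there exists B ∈ ℬ with B ≠ A, prop(B) = prop(A), and |{i ∈ prop(A) : Aᵢ ≠ Bᵢ}| odd. -/
open Finset

/-- `prop` of a box `B ⊆ {0,1}ⁿ`: the coordinates where `B i ≠ {0,1}`. -/
def bProp {n : ℕ} (B : Fin n → Finset Bool) : Finset (Fin n) :=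
  Finset.univ.filter (fun i => B i ≠ Finset.univ)

/-- weight function used in the parity argument -/
def gfun {n : ℕ} (A : Fin n → Finset Bool) (i : Fin n) (b : Bool) : ℤ :=
  if i ∈ bProp A then (if b ∈ A i then 1 else -1) else 1

lemma bool_singleton {s : Finset Bool} (h1 : s.Nonempty) (h2 : s ≠ Finset.univ) :
    ∃ a, s = {a} := by
  apply Finset.card_eq_one.mp
  have hlt : s.card < 2 := by
    have := Finset.card_lt_card (Finset.ssubset_univ_iff.mpr h2)
    simpa using this
  have := Finset.card_pos.mpr h1
  omega

lemma gfun_sum_univ {n : ℕ} (A : Fin n → Finset Bool) (i : Fin n)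
    (hi : i ∈ bProp A) (hne : (A i).Nonempty) :
    ∑ b : Bool, gfun A i b = 0 := by
  have h2 : A i ≠ Finset.univ := (Finset.mem_filter.mp hi).2
  obtain ⟨a, ha⟩ := bool_singleton hne h2
  rw [Fintype.sum_bool]
  unfold gfun
  cases a <;> simp [ha, hi]

lemma gfun_sum_notmem {n : ℕ} (A : Fin n → Finset Bool) (i : Fin n)
    (hi : i ∉ bProp A) (s : Finset Bool) :
    ∑ b ∈ s, gfun A i b = s.card := by
  unfold gfun
  simp [hi]

lemma gfun_sum_singleton {n : ℕ} (A : Fin n → Finset Bool) (i : Fin n)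
    (hi : i ∈ bProp A) (hne : (A i).Nonempty) (s : Finset Bool) (b : Bool)
    (hs : s = {b}) :
    ∑ x ∈ s, gfun A i x = if A i = s then 1 else -1 := by
  have h2 : A i ≠ Finset.univ := (Finset.mem_filter.mp hi).2
  obtain ⟨a, ha⟩ := bool_singleton hne h2
  subst hs
  unfold gfun
  simp only [Finset.sum_singleton, if_pos hi, ha]
  by_cases hab : b = a
  · subst hab; simp
  · have : ({a} : Finset Bool) ≠ {b} := by
      simp [Finset.singleton_injective.ne_iff]; exact fun h => hab h.symm
    simp [hab, this]

theorem stmt3 (n : ℕ) (ℬ : Finset (Fin n → Finset Bool))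
    (hbox : ∀ B ∈ ℬ, ∀ i, (B i).Nonempty)
    (hdisj : ∀ B ∈ ℬ, ∀ C ∈ ℬ, B ≠ C →
      Disjoint (Fintype.piFinset B) (Fintype.piFinset C))
    (hcover : ∀ x : Fin n → Bool, ∃ B ∈ ℬ, x ∈ Fintype.piFinset B)
    (A : Fin n → Finset Bool) (hA : A ∈ ℬ)
    (hmin : ∀ B ∈ ℬ, bProp A ⊆ bProp B → bProp B = bProp A)
    (hprop : 1 ≤ (bProp A).card) :
    ∃ B ∈ ℬ, B ≠ A ∧ bProp B = bProp A ∧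
      Odd ((bProp A).filter (fun i => A i ≠ B i)).card := by
  classical
  by_contra hcon
  push_neg at hcon
  -- the box-sum function
  set S : (Fin n → Finset Bool) → ℤ := fun B => ∏ i, ∑ b ∈ B i, gfun A i b with hS
  -- total sum is zero
  have hsum0 : ∑ B ∈ ℬ, S B = 0 := by
    have h1 : ∀ B : Fin n → Finset Bool,
        S B = ∑ x ∈ Fintype.piFinset B, ∏ i, gfun A i (x i) :=
      fun B => Finset.prod_univ_sum B (fun i b => gfun A i b)
    have hbu : ℬ.biUnion (fun B => Fintype.piFinset B) = Finset.univ := by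
      apply Finset.eq_univ_of_forall
      intro x
      obtain ⟨B, hB, hx⟩ := hcover x
      exact Finset.mem_biUnion.2 ⟨B, hB, hx⟩
    have hdisj' : (ℬ : Set (Fin n → Finset Bool)).PairwiseDisjoint
        (fun B => Fintype.piFinset B) := fun B hB C hC hne => hdisj B hB C hC hne
    obtain ⟨i0, hi0⟩ := Finset.card_pos.mp hprop
    calc ∑ B ∈ ℬ, S B
        = ∑ x ∈ ℬ.biUnion (fun B => Fintype.piFinset B), ∏ i, gfun A i (x i) := by
          rw [Finset.sum_biUnion hdisj']
          exact Finset.sum_congr rfl fun B _ => h1 B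
      _ = ∑ x : (Fin n → Bool), ∏ i, gfun A i (x i) := by rw [hbu]
      _ = ∏ i, ∑ b : Bool, gfun A i b := by
          rw [Finset.prod_univ_sum (fun _ => (Finset.univ : Finset Bool))
            (fun i b => gfun A i b), Fintype.piFinset_univ]
      _ = 0 := Finset.prod_eq_zero (Finset.mem_univ i0)
          (gfun_sum_univ A i0 hi0 (hbox A hA i0))
  -- every term is nonneg and S A > 0
  have hSval : ∀ B ∈ ℬ, bProp B = bProp A →
      S B = (-1 : ℤ) ^ ((bProp A).filter (fun i => A i ≠ B i)).card *
        ∏ i ∈ Finset.univ.filter (fun i => i ∉ bProp A), ((B i).card : ℤ) := by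
    intro B hB hprops
    have hsplit := Finset.prod_filter_mul_prod_filter_not Finset.univ
      (fun i => i ∈ bProp A) (fun i => ∑ b ∈ B i, gfun A i b)
    have hP : Finset.univ.filter (fun i => i ∈ bProp A) = bProp A := by
      ext i; simp only [Finset.mem_filter, Finset.mem_univ, true_and]
    show (∏ i : Fin n, ∑ b ∈ B i, gfun A i b) = _
    rw [← hsplit, hP]
    have hleft : ∏ i ∈ bProp A, (∑ b ∈ B i, gfun A i b)
        = (-1 : ℤ) ^ ((bProp A).filter (fun i => A i ≠ B i)).card := by
      have hfac : ∀ i ∈ bProp A, (∑ b ∈ B i, gfun A i b)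
          = if A i = B i then 1 else -1 := by
        intro i hi
        have hiB : i ∈ bProp B := hprops ▸ hi
        have hBne : B i ≠ Finset.univ := (Finset.mem_filter.mp hiB).2
        obtain ⟨b, hb⟩ := bool_singleton (hbox B hB i) hBne
        exact gfun_sum_singleton A i hi (hbox A hA i) (B i) b hb
      rw [Finset.prod_congr rfl hfac]
      rw [← Finset.prod_filter_mul_prod_filter_not (bProp A) (fun i => A i ≠ B i)]
      have h1 : ∏ i ∈ (bProp A).filter (fun i => A i ≠ B i),
          (if A i = B i then (1:ℤ) else -1) = (-1 : ℤ) ^ ((bProp A).filter (fun i => A i ≠ B i)).card := by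
        rw [Finset.prod_congr rfl (fun i hi => ?_), Finset.prod_const]
        have := (Finset.mem_filter.mp hi).2
        simp [this]
      have h2 : ∏ i ∈ (bProp A).filter (fun i => ¬ A i ≠ B i),
          (if A i = B i then (1:ℤ) else -1) = 1 := by
        apply Finset.prod_eq_one
        intro i hi
        have := (Finset.mem_filter.mp hi).2
        simp at this
        simp [this]
      rw [h1, h2, mul_one]
    have hright : ∏ i ∈ Finset.univ.filter (fun i => ¬ i ∈ bProp A),
        (∑ b ∈ B i, gfun A i b)
        = ∏ i ∈ Finset.univ.filter (fun i => i ∉ bProp A), ((B i).card : ℤ) := by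
      apply Finset.prod_congr rfl
      intro i hi
      exact gfun_sum_notmem A i (Finset.mem_filter.mp hi).2 (B i)
    rw [hleft, hright]
  have hMpos : ∀ B ∈ ℬ,
      0 < ∏ i ∈ Finset.univ.filter (fun i => i ∉ bProp A), ((B i).card : ℤ) := by
    intro B hB
    apply Finset.prod_pos
    intro i _
    exact_mod_cast Finset.card_pos.mpr (hbox B hB i)
  have hnonneg : ∀ B ∈ ℬ, 0 ≤ S B := by
    intro B hB
    by_cases hsub : bProp A ⊆ bProp B
    · have hprops := hmin B hB hsub
      rw [hSval B hB hprops]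
      by_cases hBA : B = A
      · subst hBA
        simp
        positivity
      · have hodd := hcon B hB hBA hprops
        rw [Nat.not_odd_iff_even] at hodd
        rw [hodd.neg_one_pow, one_mul]
        exact (hMpos B hB).le
    · obtain ⟨i, hiA, hiB⟩ := Finset.not_subset.mp hsub
      have hBu : B i = Finset.univ := by
        by_contra hne
        exact hiB (by simp only [bProp, Finset.mem_filter]; exact ⟨Finset.mem_univ i, hne⟩)
      have : (∑ b ∈ B i, gfun A i b) = 0 := by
        rw [hBu]; exact gfun_sum_univ A i hiA (hbox A hA i)
      show (0:ℤ) ≤ ∏ i : Fin n, ∑ b ∈ B i, gfun A i b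
      rw [Finset.prod_eq_zero (Finset.mem_univ i) this]
  have hApos : 0 < S A := by
    rw [hSval A hA rfl]
    simpa using hMpos A hA
  have : 0 < ∑ B ∈ ℬ, S B :=
    Finset.sum_pos' hnonneg ⟨A, hA, hApos⟩
  omega
end

section
/- Let n ≥ 3 and let V be a set of words of length n over {0,1,*} satisfying: (α₁) every v ∈ V has exactly 2 non-star symbols; (α₂) for any distinct v,u ∈ V there is exactly one index i with {vᵢ,uᵢ} = {0,1}; (α₃) distinct words have distinct sets of non-star positions. Then |V| ≤ 3, and this bound is attained (e.g. by {00*, *10, 1*1} padded with stars). -/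
open Finset

/-- The set of non-star positions of a word over `{0,1,*}` (a word is encoded as a
function `Fin n → Option Bool`, with `none` playing the role of `*`). -/
def wProp {n : ℕ} (v : Fin n → Option Bool) : Finset (Fin n) :=
  Finset.univ.filter (fun i => v i ≠ none)

/-- Membership of a point of `{0,1}ⁿ` in the box encoded by a word. -/
def inBox {n : ℕ} (x : Fin n → Bool) (v : Fin n → Option Bool) : Prop :=
  ∀ i, ∀ b, v i = some b → x i = b

/-- Conditions (α₁)–(α₃) with parameter `k`: every word has exactly `k` non-star
symbols; any two distinct words have exactly one index `i` with `{vᵢ,uᵢ} = {0,1}`;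
distinct words have distinct sets of non-star positions. -/
def Alpha {n : ℕ} (k : ℕ) (V : Finset (Fin n → Option Bool)) : Prop :=
  (∀ v ∈ V, (wProp v).card = k) ∧
  (∀ v ∈ V, ∀ u ∈ V, v ≠ u → ∃! i, ∃ b, v i = some b ∧ u i = some (!b)) ∧
  (∀ v ∈ V, ∀ u ∈ V, v ≠ u → wProp v ≠ wProp u)

lemma mem_wProp {n : ℕ} {v : Fin n → Option Bool} {i : Fin n} :
    i ∈ wProp v ↔ v i ≠ none := by simp [wProp]

/-- The word with symbol `x` at position `a`, `y` at position `b`, and stars elsewhere. -/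
def ww (a b : ℕ) (x y : Bool) (n : ℕ) : Fin n → Option Bool :=
  fun i => if i.val = a then some x else if i.val = b then some y else none

lemma wProp_ww {a b : ℕ} (x y : Bool) {n : ℕ} (hab : a ≠ b) (ha : a < n) (hb : b < n) :
    wProp (ww a b x y n) = {⟨a, ha⟩, ⟨b, hb⟩} := by
  ext i
  simp only [mem_wProp, ww, Finset.mem_insert, Finset.mem_singleton, Fin.ext_iff]
  split_ifs with h1 h2 <;> simp_all

lemma card_wProp_ww {a b : ℕ} (x y : Bool) {n : ℕ} (hab : a ≠ b) (ha : a < n) (hb : b < n) :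
    (wProp (ww a b x y n)).card = 2 := by
  rw [wProp_ww x y hab ha hb]
  rw [Finset.card_insert_of_notMem (by simp [Fin.ext_iff, hab]), Finset.card_singleton]

/-- Key structural lemma: two distinct words of an `Alpha 2` family share exactly one
non-star position, where they carry opposite values. -/
lemma alpha_inter {n : ℕ} {V : Finset (Fin n → Option Bool)} (h : Alpha 2 V)
    {v u : Fin n → Option Bool} (hv : v ∈ V) (hu : u ∈ V) (hne : v ≠ u) :
    ∃ p b, v p = some b ∧ u p = some (!b) ∧
      ∀ q, q ∈ wProp v → q ∈ wProp u → q = p := by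
  obtain ⟨h1, h2, h3⟩ := h
  obtain ⟨i, ⟨b, hvb, hub⟩, _⟩ := h2 v hv u hu hne
  refine ⟨i, b, hvb, hub, ?_⟩
  intro q hq1 hq2
  by_contra hqi
  have hi1 : i ∈ wProp v := mem_wProp.mpr (by simp [hvb])
  have hi2 : i ∈ wProp u := mem_wProp.mpr (by simp [hub])
  have hsub : ({q, i} : Finset (Fin n)) ⊆ wProp v ∩ wProp u := by
    intro j hj
    simp only [Finset.mem_insert, Finset.mem_singleton] at hj
    rcases hj with rfl | rfl <;> simp [Finset.mem_inter, *]
  have hcard2 : ({q, i} : Finset (Fin n)).card = 2 := by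
    rw [Finset.card_insert_of_notMem (by simp [hqi]), Finset.card_singleton]
  have hle : (wProp v).card ≤ (wProp v ∩ wProp u).card := by
    rw [h1 v hv, ← hcard2]
    exact Finset.card_le_card hsub
  have heq1 : wProp v ∩ wProp u = wProp v :=
    Finset.eq_of_subset_of_card_le (Finset.inter_subset_left) hle
  have hle' : (wProp u).card ≤ (wProp v ∩ wProp u).card := by
    rw [h1 u hu, ← hcard2]
    exact Finset.card_le_card hsub
  have heq2 : wProp v ∩ wProp u = wProp u :=
    Finset.eq_of_subset_of_card_le (Finset.inter_subset_right) hle'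
  exact h3 v hv u hu hne (heq1 ▸ heq2)

/-- No position is a non-star position of three distinct words of an `Alpha 2` family. -/
lemma alpha_no_three {n : ℕ} {V : Finset (Fin n → Option Bool)} (h : Alpha 2 V)
    {v1 v2 v3 : Fin n → Option Bool} (h1 : v1 ∈ V) (h2 : v2 ∈ V) (h3 : v3 ∈ V)
    (h12 : v1 ≠ v2) (h13 : v1 ≠ v3) (h23 : v2 ≠ v3) {p : Fin n}
    (hp1 : p ∈ wProp v1) (hp2 : p ∈ wProp v2) (hp3 : p ∈ wProp v3) : False := by
  obtain ⟨p12, b12, hv12, hu12, hq12⟩ := alpha_inter h h1 h2 h12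
  obtain ⟨p13, b13, hv13, hu13, hq13⟩ := alpha_inter h h1 h3 h13
  obtain ⟨p23, b23, hv23, hu23, hq23⟩ := alpha_inter h h2 h3 h23
  have e12 := hq12 p hp1 hp2
  have e13 := hq13 p hp1 hp3
  have e23 := hq23 p hp2 hp3
  subst e12; subst e13; subst e23
  rw [hv13] at hv12
  rw [hu12] at hv23
  rw [hu23] at hu13
  simp only [Option.some_inj] at hv12 hv23 hu13
  subst hv12
  rw [← hv23] at hu13
  simp at hu13

theorem stmt5 (n : ℕ) (hn : 3 ≤ n) (V : Finset (Fin n → Option Bool))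
    (h : Alpha 2 V) :
    V.card ≤ 3 ∧ ∃ W : Finset (Fin n → Option Bool), Alpha 2 W ∧ W.card = 3 := by
  constructor
  · -- upper bound
    by_contra hc
    push_neg at hc
    -- extract four distinct words
    obtain ⟨v1, hv1⟩ := Finset.card_pos.mp (show 0 < V.card by omega)
    have c1 : 0 < (V.erase v1).card := by
      rw [Finset.card_erase_of_mem hv1]; omega
    obtain ⟨v2, hv2'⟩ := Finset.card_pos.mp c1
    obtain ⟨hne21, hv2⟩ := Finset.mem_erase.mp hv2'
    have c2 : 0 < ((V.erase v1).erase v2).card := by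
      rw [Finset.card_erase_of_mem hv2', Finset.card_erase_of_mem hv1]; omega
    obtain ⟨v3, hv3'⟩ := Finset.card_pos.mp c2
    obtain ⟨hne32, hv3''⟩ := Finset.mem_erase.mp hv3'
    obtain ⟨hne31, hv3⟩ := Finset.mem_erase.mp hv3''
    have c3 : 0 < (((V.erase v1).erase v2).erase v3).card := by
      rw [Finset.card_erase_of_mem hv3', Finset.card_erase_of_mem hv2',
        Finset.card_erase_of_mem hv1]; omega
    obtain ⟨v4, hv4'⟩ := Finset.card_pos.mp c3
    obtain ⟨hne43, hv4''⟩ := Finset.mem_erase.mp hv4'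
    obtain ⟨hne42, hv4'''⟩ := Finset.mem_erase.mp hv4''
    obtain ⟨hne41, hv4⟩ := Finset.mem_erase.mp hv4'''
    -- the intersection points
    obtain ⟨x, bx, hx1, hx2, _⟩ := alpha_inter h hv1 hv2 (Ne.symm hne21)
    obtain ⟨y, by', hy1, hy3, _⟩ := alpha_inter h hv1 hv3 (Ne.symm hne31)
    obtain ⟨p, bp, hp1, hp4, _⟩ := alpha_inter h hv1 hv4 (Ne.symm hne41)
    have hxw1 : x ∈ wProp v1 := mem_wProp.mpr (by simp [hx1])
    have hxw2 : x ∈ wProp v2 := mem_wProp.mpr (by simp [hx2])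
    have hyw1 : y ∈ wProp v1 := mem_wProp.mpr (by simp [hy1])
    have hyw3 : y ∈ wProp v3 := mem_wProp.mpr (by simp [hy3])
    have hpw1 : p ∈ wProp v1 := mem_wProp.mpr (by simp [hp1])
    have hpw4 : p ∈ wProp v4 := mem_wProp.mpr (by simp [hp4])
    have hxy : x ≠ y := by
      rintro rfl
      exact alpha_no_three h hv1 hv2 hv3 (Ne.symm hne21) (Ne.symm hne31)
        (Ne.symm hne32) hxw1 hxw2 hyw3
    -- wProp v1 = {x, y}
    have hsub : ({x, y} : Finset (Fin n)) ⊆ wProp v1 := by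
      intro j hj
      simp only [Finset.mem_insert, Finset.mem_singleton] at hj
      rcases hj with rfl | rfl <;> assumption
    have hcard2 : ({x, y} : Finset (Fin n)).card = 2 := by
      rw [Finset.card_insert_of_notMem (by simp [hxy]), Finset.card_singleton]
    have heq : ({x, y} : Finset (Fin n)) = wProp v1 :=
      Finset.eq_of_subset_of_card_le hsub (by rw [h.1 v1 hv1, hcard2])
    have hpxy : p = x ∨ p = y := by
      have := heq ▸ hpw1
      simpa using this
    rcases hpxy with rfl | rfl
    · exact alpha_no_three h hv1 hv2 hv4 (Ne.symm hne21) (Ne.symm hne41)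
        (Ne.symm hne42) hxw1 hxw2 hpw4
    · exact alpha_no_three h hv1 hv3 hv4 (Ne.symm hne31) (Ne.symm hne41)
        (Ne.symm hne43) hyw1 hyw3 hpw4
  · -- construction
    refine ⟨{ww 0 1 false false n, ww 1 2 true false n, ww 0 2 true true n}, ?_, ?_⟩
    · have hne12 : ww 0 1 false false n ≠ ww 1 2 true false n := by
        intro hcon
        have := congrFun hcon ⟨1, by omega⟩
        simp [ww] at this
      have hne13 : ww 0 1 false false n ≠ ww 0 2 true true n := by
        intro hcon
        have := congrFun hcon ⟨0, by omega⟩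
        simp [ww] at this
      have hne23 : ww 1 2 true false n ≠ ww 0 2 true true n := by
        intro hcon
        have := congrFun hcon ⟨2, by omega⟩
        simp [ww] at this
      refine ⟨?_, ?_, ?_⟩
      · intro v hv
        simp only [Finset.mem_insert, Finset.mem_singleton] at hv
        rcases hv with rfl | rfl | rfl
        · exact card_wProp_ww _ _ (by omega) (by omega) (by omega)
        · exact card_wProp_ww _ _ (by omega) (by omega) (by omega)
        · exact card_wProp_ww _ _ (by omega) (by omega) (by omega)
      · intro v hv u hu hne
        simp only [Finset.mem_insert, Finset.mem_singleton] at hv hu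
        rcases hv with rfl | rfl | rfl <;> rcases hu with rfl | rfl | rfl <;>
          first
          | exact absurd rfl hne
          | · refine ⟨⟨1, by omega⟩, ⟨false, ?_, ?_⟩, ?_⟩
              · simp [ww]
              · simp [ww]
              · rintro j ⟨b, hj1, hj2⟩
                simp only [ww] at hj1 hj2
                split_ifs at hj1 hj2 <;> simp_all [Fin.ext_iff]
          | · refine ⟨⟨1, by omega⟩, ⟨true, ?_, ?_⟩, ?_⟩
              · simp [ww]
              · simp [ww]
              · rintro j ⟨b, hj1, hj2⟩
                simp only [ww] at hj1 hj2
                split_ifs at hj1 hj2 <;> simp_all [Fin.ext_iff]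
          | · refine ⟨⟨0, by omega⟩, ⟨false, ?_, ?_⟩, ?_⟩
              · simp [ww]
              · simp [ww]
              · rintro j ⟨b, hj1, hj2⟩
                simp only [ww] at hj1 hj2
                split_ifs at hj1 hj2 <;> simp_all [Fin.ext_iff]
          | · refine ⟨⟨0, by omega⟩, ⟨true, ?_, ?_⟩, ?_⟩
              · simp [ww]
              · simp [ww]
              · rintro j ⟨b, hj1, hj2⟩
                simp only [ww] at hj1 hj2
                split_ifs at hj1 hj2 <;> simp_all [Fin.ext_iff]
          | · refine ⟨⟨2, by omega⟩, ⟨false, ?_, ?_⟩, ?_⟩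
              · simp [ww]
              · simp [ww]
              · rintro j ⟨b, hj1, hj2⟩
                simp only [ww] at hj1 hj2
                split_ifs at hj1 hj2 <;> simp_all [Fin.ext_iff]
          | · refine ⟨⟨2, by omega⟩, ⟨true, ?_, ?_⟩, ?_⟩
              · simp [ww]
              · simp [ww]
              · rintro j ⟨b, hj1, hj2⟩
                simp only [ww] at hj1 hj2
                split_ifs at hj1 hj2 <;> simp_all [Fin.ext_iff]
      · intro v hv u hu hne
        simp only [Finset.mem_insert, Finset.mem_singleton] at hv hu
        rcases hv with rfl | rfl | rfl <;> rcases hu with rfl | rfl | rfl <;>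
          first
          | exact absurd rfl hne
          | · intro hcon
              have := Finset.ext_iff.mp hcon ⟨0, by omega⟩
              simp [mem_wProp, ww] at this
          | · intro hcon
              have := Finset.ext_iff.mp hcon ⟨1, by omega⟩
              simp [mem_wProp, ww] at this
    · rw [Finset.card_insert_of_notMem, Finset.card_insert_of_notMem,
        Finset.card_singleton]
      · simp only [Finset.mem_singleton]
        intro hcon
        have := congrFun hcon ⟨2, by omega⟩
        simp [ww] at this
      · simp only [Finset.mem_insert, Finset.mem_singleton]
        push_neg
        constructor <;> intro hcon
        · have := congrFun hcon ⟨1, by omega⟩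
          simp [ww] at this
        · have := congrFun hcon ⟨0, by omega⟩
          simp [ww] at this
end

section
/- For every k ≥ 2 there exist n and a set W of words of length n over {0,1,*} satisfying conditions (α₁–α₃) with parameter k such that |W| = (3/4)·2^k = 3·2^{k−2}. -/
open Finset

/-- `w *ⁿ 0` : the word `w` followed by `n` stars and a final `0`. -/
def extL (n : ℕ) (w : Fin n → Option Bool) : Fin (n + n + 1) → Option Bool :=
  fun i => if h : (i : ℕ) < n then w ⟨i, h⟩
    else if (i : ℕ) = n + n then some false else none

/-- `*ⁿ w 1` : `n` stars, then the word `w`, then a final `1`. -/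
def extR (n : ℕ) (w : Fin n → Option Bool) : Fin (n + n + 1) → Option Bool :=
  fun i => if (i : ℕ) < n then none
    else if h : (i : ℕ) < n + n then w ⟨(i : ℕ) - n, by omega⟩
    else some true

lemma extL_lt {n : ℕ} (w : Fin n → Option Bool) (i : Fin (n + n + 1)) (h : (i : ℕ) < n) :
    extL n w i = w ⟨i, h⟩ := by simp [extL, h]

lemma extL_mid {n : ℕ} (w : Fin n → Option Bool) (i : Fin (n + n + 1))
    (h1 : ¬ (i : ℕ) < n) (h2 : (i : ℕ) ≠ n + n) : extL n w i = none := by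
  simp [extL, h1, h2]

lemma extL_last {n : ℕ} (w : Fin n → Option Bool) (i : Fin (n + n + 1))
    (h : (i : ℕ) = n + n) : extL n w i = some false := by
  have h1 : ¬ (i : ℕ) < n := by omega
  simp [extL, h1, h]

lemma extR_lt {n : ℕ} (w : Fin n → Option Bool) (i : Fin (n + n + 1)) (h : (i : ℕ) < n) :
    extR n w i = none := by simp [extR, h]

lemma extR_mid {n : ℕ} (w : Fin n → Option Bool) (i : Fin (n + n + 1))
    (h1 : ¬ (i : ℕ) < n) (h2 : (i : ℕ) < n + n) :
    extR n w i = w ⟨(i : ℕ) - n, by omega⟩ := by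
  simp [extR, h1, h2]

lemma extR_last {n : ℕ} (w : Fin n → Option Bool) (i : Fin (n + n + 1))
    (h : (i : ℕ) = n + n) : extR n w i = some true := by
  have h1 : ¬ (i : ℕ) < n := by omega
  have h2 : ¬ (i : ℕ) < n + n := by omega
  simp [extR, h1, h2]

lemma extL_injective (n : ℕ) : Function.Injective (extL n) := by
  intro w u h
  funext j
  have := congrFun h ⟨j, by omega⟩
  rw [extL_lt w _ j.isLt, extL_lt u _ j.isLt] at this
  simpa using this

lemma extR_injective (n : ℕ) : Function.Injective (extR n) := by
  intro w u h
  funext j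
  have hj : (n : ℕ) + (j : ℕ) < n + n + 1 := by omega
  have := congrFun h ⟨n + j, hj⟩
  rw [extR_mid w _ (by simp) (by simp),
      extR_mid u _ (by simp) (by simp)] at this
  have he : ((n : ℕ) + (j : ℕ)) - n = (j : ℕ) := by omega
  simpa [he] using this

/-- embedding of `Fin n` as the first block of `Fin (n+n+1)` -/
def emb1 (n : ℕ) : Fin n ↪ Fin (n + n + 1) :=
  ⟨fun j => ⟨j, by omega⟩, show Function.Injective (fun j : Fin n => (⟨j, by omega⟩ : Fin (n + n + 1))) from by
    intro a b h; simpa [Fin.ext_iff] using h⟩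

/-- embedding of `Fin n` as the second block of `Fin (n+n+1)` -/
def emb2 (n : ℕ) : Fin n ↪ Fin (n + n + 1) :=
  ⟨fun j => ⟨n + j, by omega⟩, show Function.Injective (fun j : Fin n => (⟨n + j, by omega⟩ : Fin (n + n + 1))) from by
    intro a b h; simp [Fin.ext_iff] at h; exact Fin.ext h⟩

lemma wProp_extL {n : ℕ} (w : Fin n → Option Bool) :
    wProp (extL n w) = insert ⟨n + n, by omega⟩ ((wProp w).map (emb1 n)) := by
  ext i
  simp only [wProp, mem_filter, mem_univ, true_and, mem_insert, mem_map, emb1,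
    Function.Embedding.coeFn_mk]
  constructor
  · intro hi
    by_cases h : (i : ℕ) < n
    · refine Or.inr ⟨⟨i, h⟩, ?_, Fin.ext rfl⟩
      rw [extL_lt w i h] at hi; exact hi
    · by_cases h2 : (i : ℕ) = n + n
      · exact Or.inl (Fin.ext h2)
      · exact absurd (extL_mid w i h h2) hi
  · rintro (rfl | ⟨j, hj, rfl⟩)
    · rw [extL_last w _ rfl]; simp
    · rw [extL_lt w _ (by simpa using j.isLt)]
      simpa using hj
lemma wProp_extR {n : ℕ} (w : Fin n → Option Bool) :
    wProp (extR n w) = insert ⟨n + n, by omega⟩ ((wProp w).map (emb2 n)) := by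
  ext i
  simp only [wProp, mem_filter, mem_univ, true_and, mem_insert, mem_map, emb2,
    Function.Embedding.coeFn_mk]
  constructor
  · intro hi
    by_cases h : (i : ℕ) < n
    · exact absurd (extR_lt w i h) hi
    · by_cases h2 : (i : ℕ) < n + n
      · refine Or.inr ⟨⟨(i : ℕ) - n, by omega⟩, ?_, Fin.ext (by simp; omega)⟩
        rw [extR_mid w i h h2] at hi; exact hi
      · exact Or.inl (Fin.ext (by show (i:ℕ) = n + n; omega))
  · rintro (rfl | ⟨j, hj, rfl⟩)
    · rw [extR_last w _ rfl]; simp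
    · have h1 : ¬ ((n : ℕ) + (j : ℕ) < n) := by omega
      have h2 : (n : ℕ) + (j : ℕ) < n + n := by omega
      rw [extR_mid w _ (by simpa using h1) (by simpa using h2)]
      have he : ((n : ℕ) + (j : ℕ)) - n = (j : ℕ) := by omega
      simpa [he] using hj

lemma last_not_mem_map1 {n : ℕ} (A : Finset (Fin n)) :
    (⟨n + n, by omega⟩ : Fin (n + n + 1)) ∉ A.map (emb1 n) := by
  simp only [mem_map, emb1, Function.Embedding.coeFn_mk, Fin.ext_iff]
  rintro ⟨j, -, hj⟩
  have := j.isLt; omega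

lemma last_not_mem_map2 {n : ℕ} (A : Finset (Fin n)) :
    (⟨n + n, by omega⟩ : Fin (n + n + 1)) ∉ A.map (emb2 n) := by
  simp only [mem_map, emb2, Function.Embedding.coeFn_mk, Fin.ext_iff]
  rintro ⟨j, -, hj⟩
  have := j.isLt; omega

lemma insert_left_cancel {α : Type*} [DecidableEq α] {a : α} {s t : Finset α}
    (hs : a ∉ s) (ht : a ∉ t) (h : insert a s = insert a t) : s = t := by
  rw [← Finset.erase_insert hs, ← Finset.erase_insert ht, h]

instance myEU {α : Type*} [DecidableEq α] [Fintype α] (p : α → Prop) [DecidablePred p] :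
    Decidable (∃! x, p x) := by unfold ExistsUnique; infer_instance

theorem stmt11 (k : ℕ) (hk : 2 ≤ k) :
    ∃ n : ℕ, ∃ W : Finset (Fin n → Option Bool),
      Alpha k W ∧ W.card = 3 * 2 ^ (k - 2) := by
  induction k, hk using Nat.le_induction with
  | base =>
    refine ⟨3, {![some false, some false, none], ![none, some true, some false],
      ![some true, none, some true]}, ⟨?_, ?_, ?_⟩, ?_⟩
    · decide
    · unfold ExistsUnique; decide
    · decide
    · decide
  | succ k hk ih =>
    obtain ⟨n, W, ⟨ha1, ha2, ha3⟩, hcard⟩ := ih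
    refine ⟨n + n + 1, W.image (extL n) ∪ W.image (extR n), ⟨?_, ?_, ?_⟩, ?_⟩
    · -- α₁
      intro v hv
      simp only [mem_union, mem_image] at hv
      rcases hv with ⟨w, hw, rfl⟩ | ⟨w, hw, rfl⟩
      · rw [wProp_extL, card_insert_of_notMem (last_not_mem_map1 _), card_map, ha1 w hw]
      · rw [wProp_extR, card_insert_of_notMem (last_not_mem_map2 _), card_map, ha1 w hw]
    · -- α₂
      intro v hv u hu hvu
      simp only [mem_union, mem_image] at hv hu
      -- helper facts about conflicts
      rcases hv with ⟨w, hw, rfl⟩ | ⟨w, hw, rfl⟩ <;> rcases hu with ⟨w', hw', rfl⟩ | ⟨w', hw', rfl⟩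
      · -- L L
        have hww' : w ≠ w' := fun h => hvu (by rw [h])
        obtain ⟨j, ⟨b, hb1, hb2⟩, hju⟩ := ha2 w hw w' hw' hww'
        refine ⟨⟨j, by omega⟩, ⟨b, ?_, ?_⟩, ?_⟩
        · rw [extL_lt w _ (by simpa using j.isLt)]; simpa using hb1
        · rw [extL_lt w' _ (by simpa using j.isLt)]; simpa using hb2
        · rintro i ⟨b', hb1', hb2'⟩
          by_cases h : (i : ℕ) < n
          · rw [extL_lt w i h] at hb1'
            rw [extL_lt w' i h] at hb2'
            have := hju ⟨i, h⟩ ⟨b', hb1', hb2'⟩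
            exact Fin.ext (by simpa [Fin.ext_iff] using this)
          · by_cases h2 : (i : ℕ) = n + n
            · rw [extL_last w i h2] at hb1'
              rw [extL_last w' i h2] at hb2'
              simp at hb1' hb2'
              rw [hb1'] at hb2'; simp at hb2'
            · rw [extL_mid w i h h2] at hb1'; simp at hb1'
      · -- L R : unique conflict at last coordinate
        refine ⟨⟨n + n, by omega⟩, ⟨false, extL_last w _ rfl, by
          simpa using extR_last w' _ rfl⟩, ?_⟩
        rintro i ⟨b', hb1', hb2'⟩
        by_cases h : (i : ℕ) < n
        · rw [extR_lt w' i h] at hb2'; simp at hb2'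
        · by_cases h2 : (i : ℕ) = n + n
          · exact Fin.ext h2
          · rw [extL_mid w i h h2] at hb1'; simp at hb1'
      · -- R L
        refine ⟨⟨n + n, by omega⟩, ⟨true, extR_last w _ rfl, by
          simpa using extL_last w' _ rfl⟩, ?_⟩
        rintro i ⟨b', hb1', hb2'⟩
        by_cases h : (i : ℕ) < n
        · rw [extR_lt w i h] at hb1'; simp at hb1'
        · by_cases h2 : (i : ℕ) = n + n
          · exact Fin.ext h2
          · rw [extL_mid w' i h h2] at hb2'; simp at hb2'
      · -- R R
        have hww' : w ≠ w' := fun h => hvu (by rw [h])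
        obtain ⟨j, ⟨b, hb1, hb2⟩, hju⟩ := ha2 w hw w' hw' hww'
        have hj1 : ¬ ((n : ℕ) + (j : ℕ) < n) := by omega
        have hj2 : (n : ℕ) + (j : ℕ) < n + n := by omega
        have he : ((n : ℕ) + (j : ℕ)) - n = (j : ℕ) := by omega
        refine ⟨⟨n + j, by omega⟩, ⟨b, ?_, ?_⟩, ?_⟩
        · rw [extR_mid w _ (by simpa using hj1) (by simpa using hj2)]
          simpa [he] using hb1
        · rw [extR_mid w' _ (by simpa using hj1) (by simpa using hj2)]
          simpa [he] using hb2
        · rintro i ⟨b', hb1', hb2'⟩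
          by_cases h : (i : ℕ) < n
          · rw [extR_lt w i h] at hb1'; simp at hb1'
          · by_cases h2 : (i : ℕ) < n + n
            · rw [extR_mid w i h h2] at hb1'
              rw [extR_mid w' i h h2] at hb2'
              have := hju ⟨(i : ℕ) - n, by omega⟩ ⟨b', hb1', hb2'⟩
              have := congrArg Fin.val this
              simp at this
              exact Fin.ext (by show (i:ℕ) = n + (j:ℕ); omega)
            · rw [extR_last w i (by omega)] at hb1'
              rw [extR_last w' i (by omega)] at hb2'
              simp at hb1' hb2'
              rw [hb1'] at hb2'; simp at hb2'
    · -- α₃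
      intro v hv u hu hvu
      simp only [mem_union, mem_image] at hv hu
      have hWne : ∀ w ∈ W, (wProp w).Nonempty := by
        intro w hw
        rw [← card_pos, ha1 w hw]; omega
      rcases hv with ⟨w, hw, rfl⟩ | ⟨w, hw, rfl⟩ <;> rcases hu with ⟨w', hw', rfl⟩ | ⟨w', hw', rfl⟩
      · have hww' : w ≠ w' := fun h => hvu (by rw [h])
        rw [wProp_extL, wProp_extL]
        intro h
        have := ha3 w hw w' hw' hww'
        apply this
        have h2 : (wProp w).map (emb1 n) = (wProp w').map (emb1 n) :=
          insert_left_cancel (last_not_mem_map1 _) (last_not_mem_map1 _) h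
        exact Finset.map_injective _ h2
      · -- L vs R : position sets differ
        rw [wProp_extL, wProp_extR]
        intro h
        obtain ⟨j, hj⟩ := hWne w hw
        have hmem : (emb1 n j) ∈ insert (⟨n + n, by omega⟩ : Fin (n+n+1)) ((wProp w).map (emb1 n)) :=
          mem_insert_of_mem (mem_map_of_mem _ hj)
        rw [h] at hmem
        simp only [mem_insert, mem_map, emb1, emb2, Function.Embedding.coeFn_mk,
          Fin.ext_iff] at hmem
        have hjlt := j.isLt
        rcases hmem with h1 | ⟨j', -, h2⟩
        · omega
        · omega
      · rw [wProp_extR, wProp_extL]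
        intro h
        obtain ⟨j, hj⟩ := hWne w' hw'
        have hmem : (emb1 n j) ∈ insert (⟨n + n, by omega⟩ : Fin (n+n+1)) ((wProp w').map (emb1 n)) :=
          mem_insert_of_mem (mem_map_of_mem _ hj)
        rw [← h] at hmem
        simp only [mem_insert, mem_map, emb1, emb2, Function.Embedding.coeFn_mk,
          Fin.ext_iff] at hmem
        have hjlt := j.isLt
        rcases hmem with h1 | ⟨j', -, h2⟩
        · omega
        · omega
      · have hww' : w ≠ w' := fun h => hvu (by rw [h])
        rw [wProp_extR, wProp_extR]
        intro h
        have := ha3 w hw w' hw' hww'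
        apply this
        have h2 : (wProp w).map (emb2 n) = (wProp w').map (emb2 n) :=
          insert_left_cancel (last_not_mem_map2 _) (last_not_mem_map2 _) h
        exact Finset.map_injective _ h2
    · -- cardinality
      have hdisj : Disjoint (W.image (extL n)) (W.image (extR n)) := by
        simp only [Finset.disjoint_left, mem_image]
        rintro a ⟨w, hw, rfl⟩ ⟨w', hw', he⟩
        have := congrFun he ⟨n + n, by omega⟩
        rw [extR_last w' _ rfl, extL_last w _ rfl] at this
        simp at this
      rw [card_union_of_disjoint hdisj,
        card_image_of_injective _ (extL_injective n),
        card_image_of_injective _ (extR_injective n), hcard]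
      have : k + 1 - 2 = (k - 2) + 1 := by omega
      rw [this]; ring
end

section
/- Let 3 ≤ k < n and let V satisfy conditions (α₁–α₃). If there exists a coordinate i such that |V^{i0}| ≠ |V^{i1}|, where V^{iε} = {v ∈ V : vᵢ = ε}, then |V| ≤ 2^k − 2. -/
open Finset

instance {n : ℕ} (x : Fin n → Bool) (v : Fin n → Option Bool) : Decidable (inBox x v) := by
  unfold inBox; infer_instance

def chi {n : ℕ} (S : Finset (Fin n)) (x : Fin n → Bool) : ℤ :=
  ∏ j ∈ S, (if x j then -1 else 1)

def sgnW {n : ℕ} (S : Finset (Fin n)) (v : Fin n → Option Bool) : ℤ :=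
  ∏ j ∈ S, (if v j = some true then -1 else 1)

def boxInd {n : ℕ} (v : Fin n → Option Bool) (x : Fin n → Bool) : ℤ :=
  if inBox x v then 1 else 0

lemma sum_prod_bool {n : ℕ} (f : Fin n → Bool → ℤ) :
    ∑ x : Fin n → Bool, ∏ j, f j (x j) = ∏ j, (f j false + f j true) := by
  have := Finset.prod_univ_sum (fun _ : Fin n => (Finset.univ : Finset Bool)) f
  rw [Fintype.piFinset_univ] at this
  rw [← this]
  congr 1; ext j
  simp [Fintype.sum_bool]; ring

lemma gval_aux {n : ℕ} (v : Fin n → Option Bool) (S : Finset (Fin n)) (j : Fin n) :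
    ((if (∀ c, v j = some c → false = c) then (1:ℤ) else 0) *
              (if j ∈ S then (if false then -1 else 1) else 1))
           + ((if (∀ c, v j = some c → true = c) then (1:ℤ) else 0) *
              (if j ∈ S then (if true then -1 else 1) else 1))
      = if v j = none then (if j ∈ S then 0 else 2)
        else (if j ∈ S then (if v j = some true then -1 else 1) else 1) := by
  rcases hj : v j with _ | b
  · simp only [hj, if_true]
    split_ifs <;> simp_all
  · rcases b <;> simp only [hj] <;> split_ifs <;> simp_all

lemma boxSum_eq {n : ℕ} (v : Fin n → Option Bool) (S : Finset (Fin n)) :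
    ∑ x : Fin n → Bool, boxInd v x * chi S x
      = if S ⊆ wProp v then 2 ^ ((wProp v)ᶜ.card) * sgnW S v else 0 := by
  -- pointwise factorization
  have key : ∀ x : Fin n → Bool, boxInd v x * chi S x
      = ∏ j, ((if (∀ c, v j = some c → x j = c) then (1:ℤ) else 0) *
              (if j ∈ S then (if x j then -1 else 1) else 1)) := by
    intro x
    rw [Finset.prod_mul_distrib]
    congr 1
    · rw [Finset.prod_boole]
      unfold boxInd inBox
      congr 1
      simp
    · unfold chi
      rw [Finset.prod_ite_mem, Finset.univ_inter]
  simp_rw [key]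
  rw [sum_prod_bool (fun j b => (if (∀ c, v j = some c → b = c) then (1:ℤ) else 0) *
              (if j ∈ S then (if b then -1 else 1) else 1))]
  rw [Finset.prod_congr rfl (fun j _ => gval_aux v S j)]
  by_cases hS : S ⊆ wProp v
  · rw [if_pos hS]
    rw [← Finset.prod_mul_prod_compl S]
    have h1 : ∀ j ∈ S, (if v j = none then (if j ∈ S then (0:ℤ) else 2)
        else (if j ∈ S then (if v j = some true then -1 else 1) else 1))
        = (if v j = some true then -1 else 1) := by
      intro j hj
      have : v j ≠ none := by have := hS hj; simpa [wProp] using this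
      simp [this, hj]
    have h2 : ∀ j ∈ Sᶜ, (if v j = none then (if j ∈ S then (0:ℤ) else 2)
        else (if j ∈ S then (if v j = some true then -1 else 1) else 1))
        = (if v j = none then 2 else 1) := by
      intro j hj
      have hj' : j ∉ S := by simpa using hj
      simp [hj']
    have hfil : (Sᶜ.filter (fun j => v j = none)) = (wProp v)ᶜ := by
      ext j
      simp only [mem_filter, mem_compl, wProp, Finset.mem_filter, mem_univ, true_and, not_not]
      constructor
      · rintro ⟨_, hb⟩; exact hb
      · intro hb
        refine ⟨fun hjS => ?_, hb⟩
        have := hS hjS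
        simp [wProp, hb] at this
    have e2 : (∏ j ∈ Sᶜ, (if v j = none then (2:ℤ) else 1)) = 2 ^ ((wProp v)ᶜ.card) := by
      rw [Finset.prod_ite, Finset.prod_const, Finset.prod_const_one, mul_one, hfil]
    rw [Finset.prod_congr rfl h1, Finset.prod_congr rfl h2, e2, mul_comm]
    rfl
  · rw [if_neg hS]
    obtain ⟨j, hjS, hjn⟩ : ∃ j ∈ S, v j = none := by
      by_contra hc
      push_neg at hc
      exact hS fun j hj => by simp [wProp, hc j hj]
    exact Finset.prod_eq_zero (Finset.mem_univ j) (by simp [hjn, hjS])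

lemma chi_sum_eq {n : ℕ} (S : Finset (Fin n)) :
    ∑ x : Fin n → Bool, chi S x = if S = ∅ then 2 ^ n else 0 := by
  have hthis := boxSum_eq (fun _ : Fin n => (none : Option Bool)) S
  have hb : ∀ x : Fin n → Bool, boxInd (fun _ : Fin n => (none : Option Bool)) x = 1 := by
    intro x
    unfold boxInd
    rw [if_pos]
    intro i b hb
    cases hb
  simp_rw [hb, one_mul] at hthis
  have hw : wProp (fun _ : Fin n => (none : Option Bool)) = ∅ := by
    ext j; simp [wProp]
  rw [hw] at hthis
  rw [hthis]
  by_cases hS : S = ∅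
  · subst hS
    simp [sgnW, Finset.card_compl]
  · rw [if_neg (by simpa [Finset.subset_empty] using hS), if_neg hS]

lemma parseval {n : ℕ} (U : Finset (Fin n → Bool)) :
    ∑ S : Finset (Fin n), (∑ x ∈ U, chi S x) ^ 2 = 2 ^ n * U.card := by
  have expand : ∀ S : Finset (Fin n), (∑ x ∈ U, chi S x) ^ 2
      = ∑ x ∈ U, ∑ y ∈ U, chi S x * chi S y := by
    intro S
    rw [sq, Finset.sum_mul_sum]
  simp_rw [expand]
  rw [Finset.sum_comm]
  have swap2 : ∀ x, ∑ S : Finset (Fin n), ∑ y ∈ U, chi S x * chi S y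
      = ∑ y ∈ U, ∑ S : Finset (Fin n), chi S x * chi S y := fun x => Finset.sum_comm
  simp_rw [swap2]
  have inner : ∀ x y : Fin n → Bool, ∑ S : Finset (Fin n), chi S x * chi S y
      = if x = y then 2 ^ n else 0 := by
    intro x y
    have hc : ∀ S : Finset (Fin n), chi S x * chi S y
        = ∏ j ∈ S, ((if x j then (-1:ℤ) else 1) * (if y j then -1 else 1)) := by
      intro S
      rw [Finset.prod_mul_distrib]; rfl
    simp_rw [hc]
    have hpow : ∑ S : Finset (Fin n), ∏ j ∈ S,
        ((if x j then (-1:ℤ) else 1) * (if y j then -1 else 1))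
        = ∏ j, (((if x j then (-1:ℤ) else 1) * (if y j then -1 else 1)) + 1) := by
      rw [Finset.prod_add]
      rw [← Finset.powerset_univ]
      exact (Finset.sum_congr rfl (fun t _ => by rw [Finset.prod_const_one, mul_one])).symm
    rw [hpow]
    by_cases hxy : x = y
    · subst hxy
      rw [if_pos rfl]
      have : ∀ j, (((if x j then (-1:ℤ) else 1) * (if x j then -1 else 1)) + 1) = 2 := by
        intro j; split_ifs <;> norm_num
      rw [Finset.prod_congr rfl (fun j _ => this j), Finset.prod_const]
      simp
    · rw [if_neg hxy]
      obtain ⟨j, hj⟩ : ∃ j, x j ≠ y j := by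
        by_contra hc2
        push_neg at hc2
        exact hxy (funext hc2)
      refine Finset.prod_eq_zero (Finset.mem_univ j) ?_
      cases hxj : x j <;> cases hyj : y j <;>
        first
          | exact absurd (hxj.trans hyj.symm) hj
          | norm_num
  simp_rw [inner]
  rw [Finset.sum_congr rfl (fun x _ => Finset.sum_ite_eq U x (fun _ => (2:ℤ) ^ n))]
  rw [Finset.sum_congr rfl (fun x hx => if_pos hx), Finset.sum_const]
  ring


def starU {n : ℕ} (V : Finset (Fin n → Option Bool)) : Finset (Fin n → Bool) :=
  Finset.univ.filter (fun x => ∀ v ∈ V, ¬ inBox x v)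

def NN {n : ℕ} (V : Finset (Fin n → Option Bool)) (S : Finset (Fin n)) : ℤ :=
  ∑ v ∈ V, (if S ⊆ wProp v then sgnW S v else 0)

lemma sgnW_sq {n : ℕ} (S : Finset (Fin n)) (v : Fin n → Option Bool) :
    (sgnW S v) ^ 2 = 1 := by
  unfold sgnW
  rw [← Finset.prod_pow]
  rw [Finset.prod_congr rfl (fun j _ => show ((if v j = some true then (-1:ℤ) else 1))^2 = 1 by
    split_ifs <;> norm_num)]
  exact Finset.prod_const_one


theorem stmt13 (n k : ℕ) (hk : 3 ≤ k) (hkn : k < n)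
    (V : Finset (Fin n → Option Bool)) (h : Alpha k V) (i : Fin n)
    (hne : (V.filter (fun v => v i = some false)).card ≠
           (V.filter (fun v => v i = some true)).card) :
    V.card ≤ 2 ^ k - 2 := by
  obtain ⟨h1, h2, h3⟩ := h
  by_contra hcon
  push_neg at hcon
  have h8 : 8 ≤ 2 ^ k := by
    calc (8:ℕ) = 2 ^ 3 := by norm_num
    _ ≤ 2 ^ k := Nat.pow_le_pow_right (by norm_num) hk
  have hmk : 2 ^ k ≤ V.card + 1 := by omega
  set m : ℤ := (V.card : ℤ) with hmdef
  clear_value m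
  -- pointwise disjointness identity
  have hpoint : ∀ x : Fin n → Bool,
      (∑ v ∈ V, boxInd v x) = 1 - (if (∀ v ∈ V, ¬ inBox x v) then (1:ℤ) else 0) := by
    intro x
    by_cases hx : ∀ v ∈ V, ¬ inBox x v
    · rw [if_pos hx]
      have hz : ∑ v ∈ V, boxInd v x = 0 :=
        Finset.sum_eq_zero (fun v hv => by unfold boxInd; exact if_neg (hx v hv))
      rw [hz]; norm_num
    · rw [if_neg hx]
      push_neg at hx
      obtain ⟨v₀, hv₀V, hv₀⟩ := hx
      rw [Finset.sum_eq_single_of_mem v₀ hv₀V]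
      · unfold boxInd; rw [if_pos hv₀]; ring
      · intro u huV hu
        unfold boxInd
        rw [if_neg]
        intro hub
        obtain ⟨j, ⟨b, hb1, hb2⟩, _⟩ := h2 u huV v₀ hv₀V hu
        have e1 := hub j b hb1
        have e2 := hv₀ j (!b) hb2
        rw [e1] at e2
        cases b <;> exact absurd e2 (by decide)
  -- the Fourier coefficient of the uncovered set
  have hU : ∀ S : Finset (Fin n), ∑ x ∈ starU V, chi S x
      = (if S = ∅ then (2:ℤ) ^ n else 0) - 2 ^ (n - k) * NN V S := by
    intro S
    have step1 : ∑ x ∈ starU V, chi S x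
        = ∑ x : Fin n → Bool, (if (∀ v ∈ V, ¬ inBox x v) then (1:ℤ) else 0) * chi S x := by
      rw [starU, Finset.sum_filter]
      exact Finset.sum_congr rfl fun x _ => by split_ifs <;> ring
    rw [step1]
    have step2 : ∀ x : Fin n → Bool,
        (if (∀ v ∈ V, ¬ inBox x v) then (1:ℤ) else 0) * chi S x
        = chi S x - (∑ v ∈ V, boxInd v x) * chi S x := by
      intro x
      rw [hpoint x]; ring
    rw [Finset.sum_congr rfl (fun x _ => step2 x), Finset.sum_sub_distrib, chi_sum_eq]
    congr 1
    calc ∑ x : Fin n → Bool, (∑ v ∈ V, boxInd v x) * chi S x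
        = ∑ x : Fin n → Bool, ∑ v ∈ V, boxInd v x * chi S x := by
          exact Finset.sum_congr rfl fun x _ => by rw [Finset.sum_mul]
      _ = ∑ v ∈ V, ∑ x : Fin n → Bool, boxInd v x * chi S x := Finset.sum_comm
      _ = ∑ v ∈ V, (if S ⊆ wProp v then 2 ^ ((wProp v)ᶜ.card) * sgnW S v else 0) := by
          exact Finset.sum_congr rfl fun v _ => boxSum_eq v S
      _ = ∑ v ∈ V, 2 ^ (n - k) * (if S ⊆ wProp v then sgnW S v else 0) := by
          refine Finset.sum_congr rfl fun v hv => ?_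
          have hcc : (wProp v)ᶜ.card = n - k := by
            rw [Finset.card_compl, h1 v hv]
            simp
          rw [hcc]
          split_ifs <;> ring
      _ = 2 ^ (n - k) * NN V S := by rw [NN, Finset.mul_sum]
  -- value at ∅
  have hchi0 : ∑ x ∈ starU V, chi ∅ x = ((starU V).card : ℤ) := by
    simp [chi]
  have hN0 : NN V ∅ = m := by
    rw [NN, hmdef]
    simp [Finset.empty_subset, sgnW]
  have hUcard : ((starU V).card : ℤ) = 2 ^ n - 2 ^ (n - k) * m := by
    have := hU ∅
    rw [hchi0, if_pos rfl, hN0] at this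
    exact this
  -- Parseval
  set D : ℤ := 2 ^ k - m with hDdef
  clear_value D
  have hpow2 : (2:ℤ) ^ n = 2 ^ (n - k) * 2 ^ k := by
    rw [← pow_add]
    congr 1
    omega
  have hcard' : ((starU V).card : ℤ) = 2 ^ (n - k) * D := by
    rw [hUcard, hDdef, hpow2]; ring
  have hsplit : ∑ S : Finset (Fin n), (∑ x ∈ starU V, chi S x) ^ 2
      = ((starU V).card : ℤ) ^ 2
        + ∑ S ∈ Finset.univ.erase ∅, (2 ^ (n - k) * NN V S) ^ 2 := by
    rw [← Finset.add_sum_erase Finset.univ _ (Finset.mem_univ (∅ : Finset (Fin n)))]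
    congr 1
    · rw [hchi0]
    · refine Finset.sum_congr rfl fun S hS => ?_
      have hSne : S ≠ ∅ := (Finset.mem_erase.1 hS).1
      rw [hU S, if_neg hSne, zero_sub, neg_sq]
  have hqq : D ^ 2 + ∑ S ∈ Finset.univ.erase ∅, (NN V S) ^ 2 = 2 ^ k * D := by
    have hp := parseval (starU V)
    rw [hsplit, hcard', hpow2] at hp
    have hexp : ∑ S ∈ Finset.univ.erase ∅, ((2:ℤ) ^ (n - k) * NN V S) ^ 2
        = ((2:ℤ) ^ (n - k)) ^ 2 * ∑ S ∈ Finset.univ.erase ∅, (NN V S) ^ 2 := by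
      rw [Finset.mul_sum]
      exact Finset.sum_congr rfl fun S _ => by ring
    rw [hexp] at hp
    have hne2 : ((2:ℤ) ^ (n - k)) ^ 2 ≠ 0 := by positivity
    apply mul_left_cancel₀ hne2
    rw [mul_add]
    rw [show ((2:ℤ)^(n-k))^2 * (D^2) = (2^(n-k)*D)^2 by ring]
    linarith [hp]
  -- lower bound on the sum of squares
  have hNsupp : ∀ v ∈ V, NN V (wProp v) = sgnW (wProp v) v := by
    intro v hv
    rw [NN, Finset.sum_eq_single_of_mem v hv]
    · rw [if_pos (Finset.Subset.refl _)]
    · intro u huV hne'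
      rw [if_neg]
      intro hsub
      have heq : wProp v = wProp u :=
        Finset.eq_of_subset_of_card_le hsub (by rw [h1 v hv, h1 u huV])
      exact h3 u huV v hv hne' heq.symm
  have hNi : NN V {i} = ((V.filter (fun v => v i = some false)).card : ℤ)
                   - ((V.filter (fun v => v i = some true)).card : ℤ) := by
    have hterm : ∀ v : Fin n → Option Bool, (if ({i} : Finset (Fin n)) ⊆ wProp v then sgnW {i} v else 0)
        = (if v i = some false then (1:ℤ) else 0) - (if v i = some true then 1 else 0) := by
      intro v
      have hsg : sgnW {i} v = if v i = some true then -1 else 1 := by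
        simp [sgnW]
      rcases hv : v i with _ | b
      · rw [if_neg (by simp [wProp, Finset.singleton_subset_iff, hv])]
        simp [hv]
      · rw [if_pos (by simp [wProp, Finset.singleton_subset_iff, hv])]
        cases b <;> simp [hsg, hv]
    rw [NN, Finset.sum_congr rfl (fun v _ => hterm v), Finset.sum_sub_distrib]
    simp [Finset.sum_boole]
  have hNi_sq : 1 ≤ (NN V {i}) ^ 2 := by
    have hne0 : NN V {i} ≠ 0 := by
      rw [hNi]
      intro h0
      apply hne
      have := sub_eq_zero.mp h0
      exact_mod_cast this
    have habs : 1 ≤ |NN V {i}| := Int.one_le_abs hne0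
    calc (1:ℤ) ≤ |NN V {i}| := habs
    _ ≤ |NN V {i}| ^ 2 := le_self_pow₀ (by linarith) (by norm_num)
    _ = (NN V {i}) ^ 2 := sq_abs _
  have hiT : ({i} : Finset (Fin n)) ∉ V.image wProp := by
    intro hmem
    obtain ⟨v, hv, he⟩ := Finset.mem_image.1 hmem
    have hc1 : ({i} : Finset (Fin n)).card = k := by rw [← he]; exact h1 v hv
    rw [Finset.card_singleton] at hc1
    exact absurd hc1 (Nat.ne_of_lt (lt_of_lt_of_le (by norm_num) hk))
  have hTsub : insert ({i} : Finset (Fin n)) (V.image wProp) ⊆ Finset.univ.erase ∅ := by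
    intro S hS
    rw [Finset.mem_erase]
    refine ⟨?_, Finset.mem_univ S⟩
    rcases Finset.mem_insert.1 hS with hh | hh
    · subst hh; simp
    · obtain ⟨v, hv, he⟩ := Finset.mem_image.1 hh
      intro h0
      have hc1 : (∅ : Finset (Fin n)).card = k := by rw [← h0, ← he]; exact h1 v hv
      rw [Finset.card_empty] at hc1
      exact absurd hc1 (Nat.ne_of_lt (lt_of_lt_of_le (by norm_num) hk))
  have hlow : m + 1 ≤ ∑ S ∈ Finset.univ.erase ∅, (NN V S) ^ 2 := by
    have h5 : ∑ S ∈ insert ({i} : Finset (Fin n)) (V.image wProp), (NN V S) ^ 2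
        ≤ ∑ S ∈ Finset.univ.erase ∅, (NN V S) ^ 2 :=
      Finset.sum_le_sum_of_subset_of_nonneg hTsub (fun S _ _ => sq_nonneg _)
    have h6 : ∑ S ∈ insert ({i} : Finset (Fin n)) (V.image wProp), (NN V S) ^ 2
        = (NN V {i}) ^ 2 + ∑ S ∈ V.image wProp, (NN V S) ^ 2 := Finset.sum_insert hiT
    have h7 : ∑ S ∈ V.image wProp, (NN V S) ^ 2 = ∑ v ∈ V, (NN V (wProp v)) ^ 2 :=
      Finset.sum_image (fun v hv u hu he =>
        by_contra fun hne' => h3 v hv u hu hne' he)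
    have h8' : ∑ v ∈ V, (NN V (wProp v)) ^ 2 = m := by
      rw [Finset.sum_congr rfl (fun v hv => by rw [hNsupp v hv, sgnW_sq]), hmdef]
      simp
    rw [h6, h7, h8'] at h5
    linarith [hNi_sq]
  -- conclude
  have hDle : D ≤ 1 := by
    rw [hDdef, hmdef]
    have : ((2:ℤ) ^ k) ≤ (V.card : ℤ) + 1 := by exact_mod_cast hmk
    linarith
  have hD0 : 0 ≤ D := by
    have hpos : (0:ℤ) < 2 ^ (n - k) := by positivity
    have hnn : (0:ℤ) ≤ 2 ^ (n - k) * D := by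
      rw [← hcard']; exact Int.natCast_nonneg _
    exact (mul_nonneg_iff_of_pos_left hpos).mp hnn
  have hfin : m + 1 ≤ 2 ^ k * D - D ^ 2 := by linarith [hqq, hlow]
  have hm' : m = 2 ^ k - D := by rw [hDdef]; ring
  have hp2 : (0:ℤ) ≤ 2 ^ k := by positivity
  have hint1 : (0:ℤ) ≤ 2 ^ k - D * 2 ^ k := by
    have h9 := mul_nonneg (sub_nonneg.2 hDle) hp2
    linarith [h9]
  have hint2 : (0:ℤ) ≤ 4 * D ^ 2 - 4 * D + 1 := by
    have h9 := sq_nonneg (2 * D - 1)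
    linarith [h9]
  have hm2 : D * 2 ^ k = 2 ^ k * D := by ring
  linarith [hfin, hint1, hint2, hm']
end

section
/- Let 3 ≤ k < n, let V satisfy (α₁–α₃), and suppose the word u = 0^k *^{n−k} belongs to V. For each word δ ∈ {0,1}^{n−k}, consider the subcube *^k δ = {x ∈ {0,1}ⁿ : x_{k+1}⋯x_n = δ}, which has 2^k elements. Then the point 0^k δ belongs to u, and the family B^δ = {v ∩ *^k δ : v ∈ V, v ∩ *^k δ ≠ ∅} of boxes does not cover *^k δ; moreover there exists a point w^δ ∈ *^k δ uncovered by V whose number of 1's among its first k coordinates is odd. -/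
open Finset

lemma box_disjoint {n k : ℕ} {V : Finset (Fin n → Option Bool)} (h : Alpha k V)
    {v u : Fin n → Option Bool} (hv : v ∈ V) (hu : u ∈ V) (hne : v ≠ u)
    {x : Fin n → Bool} (hxv : inBox x v) (hxu : inBox x u) : False := by
  obtain ⟨i, ⟨b, h1, h2⟩, -⟩ := h.2.1 v hv u hu hne
  have e1 := hxv i b h1
  have e2 := hxu i (!b) h2
  rw [e1] at e2
  simp at e2

lemma parity_flip {n k : ℕ} (x : Fin n → Bool) (j : Fin n) (hj : j.val < k) :
    Odd ((univ.filter (fun i : Fin n => i.val < k ∧ Function.update x j (!x j) i = true)).card) ↔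
    ¬ Odd ((univ.filter (fun i : Fin n => i.val < k ∧ x i = true)).card) := by
  by_cases hx : x j = true
  · have hset : (univ.filter (fun i : Fin n => i.val < k ∧ Function.update x j (!x j) i = true))
        = (univ.filter (fun i : Fin n => i.val < k ∧ x i = true)).erase j := by
      ext i
      by_cases hij : i = j <;>
        simp [Function.update_apply, hij, hx, hj]
    have hjmem : j ∈ univ.filter (fun i : Fin n => i.val < k ∧ x i = true) := by
      simp [hj, hx]
    rw [hset, Finset.card_erase_of_mem hjmem]
    have hpos : 1 ≤ (univ.filter (fun i : Fin n => i.val < k ∧ x i = true)).card :=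
      Finset.card_pos.mpr ⟨j, hjmem⟩
    rw [Nat.odd_iff, Nat.odd_iff]
    omega
  · have hset : (univ.filter (fun i : Fin n => i.val < k ∧ Function.update x j (!x j) i = true))
        = insert j (univ.filter (fun i : Fin n => i.val < k ∧ x i = true)) := by
      ext i
      by_cases hij : i = j <;>
        simp [Function.update_apply, hij, hx, hj]
    have hjmem : j ∉ univ.filter (fun i : Fin n => i.val < k ∧ x i = true) := by
      simp [hj, hx]
    rw [hset, Finset.card_insert_of_notMem hjmem]
    rw [Nat.odd_iff, Nat.odd_iff]
    omega

lemma free_coord {n k : ℕ} {V : Finset (Fin n → Option Bool)} (h : Alpha k V)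
    (hu : (fun i : Fin n => if i.val < k then some false else (none : Option Bool)) ∈ V)
    {v : Fin n → Option Bool} (hv : v ∈ V)
    (hne : v ≠ (fun i : Fin n => if i.val < k then some false else (none : Option Bool))) :
    ∃ j : Fin n, j.val < k ∧ v j = none := by
  by_contra hcon
  push_neg at hcon
  set u0 : Fin n → Option Bool := fun i : Fin n => if i.val < k then some false else none with hu0
  have hsub : wProp u0 ⊆ wProp v := by
    intro i hi
    simp only [wProp, mem_filter, mem_univ, true_and, hu0] at hi ⊢
    by_cases hik : i.val < k
    · exact hcon i hik
    · simp [hik] at hi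
  have hcv := h.1 v hv
  have hcu := h.1 u0 hu
  have heq : wProp v = wProp u0 :=
    (Finset.eq_of_subset_of_card_le hsub (by rw [hcv, hcu])).symm
  exact h.2.2 v hv u0 hu hne heq

theorem stmt17 (n k : ℕ) (hk : 3 ≤ k) (hkn : k < n)
    (V : Finset (Fin n → Option Bool)) (h : Alpha k V)
    (hu : (fun i : Fin n => if i.val < k then some false else (none : Option Bool)) ∈ V)
    (δ : Fin n → Bool) :
    inBox (fun i : Fin n => if i.val < k then false else δ i)
        (fun i : Fin n => if i.val < k then some false else none) ∧
    ∃ w : Fin n → Bool, (∀ i : Fin n, k ≤ i.val → w i = δ i) ∧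
      (∀ v ∈ V, ¬ inBox w v) ∧
      Odd (Finset.univ.filter (fun i : Fin n => i.val < k ∧ w i = true)).card := by
  classical
  set u0 : Fin n → Option Bool := fun i : Fin n => if i.val < k then some false else none with hu0
  set p : Fin n → Bool := fun i : Fin n => if i.val < k then false else δ i with hp
  have hpbox : inBox p u0 := by
    intro i b hb
    by_cases hik : i.val < k <;> simp [hu0, hp, hik] at hb ⊢
    exact hb
  refine ⟨hpbox, ?_⟩
  set S : Finset (Fin n → Bool) :=
    univ.filter (fun x => ∀ i : Fin n, k ≤ i.val → x i = δ i) with hS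
  set A : Finset (Fin n → Bool) :=
    S.filter (fun x => Odd ((univ.filter (fun i : Fin n => i.val < k ∧ x i = true)).card)) with hA
  set E : Finset (Fin n → Bool) :=
    S.filter (fun x => ¬ Odd ((univ.filter (fun i : Fin n => i.val < k ∧ x i = true)).card)) with hE
  have hj0 : (0 : ℕ) < n := by omega
  have hflipS : ∀ (x : Fin n → Bool) (j : Fin n), j.val < k → x ∈ S →
      Function.update x j (!x j) ∈ S := by
    intro x j hjk hx
    simp only [hS, mem_filter, mem_univ, true_and] at hx ⊢
    intro i hik
    have hij : i ≠ j := by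
      intro e; rw [e] at hik; omega
    rw [Function.update_of_ne hij]
    exact hx i hik
  have hcardAE : A.card = E.card := by
    have hj0k : ((⟨0, hj0⟩ : Fin n)).val < k := by simpa using by omega
    refine Finset.card_bij' (fun x _ => Function.update x ⟨0, hj0⟩ (!x ⟨0, hj0⟩))
      (fun x _ => Function.update x ⟨0, hj0⟩ (!x ⟨0, hj0⟩)) ?_ ?_ ?_ ?_
    · intro a ha
      simp only [hA, mem_filter] at ha
      simp only [hE, mem_filter]
      refine ⟨hflipS a _ hj0k ha.1, fun ho => (parity_flip (k := k) a _ hj0k).mp ho ha.2⟩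
    · intro a ha
      simp only [hE, mem_filter] at ha
      simp only [hA, mem_filter]
      exact ⟨hflipS a _ hj0k ha.1, (parity_flip (k := k) a _ hj0k).mpr ha.2⟩
    · intro a _
      funext i
      by_cases hij : i = (⟨0, hj0⟩ : Fin n) <;> simp [Function.update_apply, hij]
    · intro a _
      funext i
      by_cases hij : i = (⟨0, hj0⟩ : Fin n) <;> simp [Function.update_apply, hij]
  have hpE : p ∈ E := by
    simp only [hE, hS, mem_filter, mem_univ, true_and]
    refine ⟨fun i hik => by simp [hp, Nat.not_lt.mpr hik], ?_⟩
    have hempty : (univ.filter (fun i : Fin n => i.val < k ∧ p i = true)) = ∅ := by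
      ext i
      simp only [mem_filter, mem_univ, true_and, Finset.notMem_empty, iff_false, not_and]
      intro hik
      simp [hp, hik]
    rw [hempty]
    simp [Nat.odd_iff]
  by_contra hcon
  push_neg at hcon
  have hcov : ∀ x ∈ A, ∃ v ∈ V, inBox x v := by
    intro x hx
    by_contra hc
    push_neg at hc
    simp only [hA, hS, mem_filter, mem_univ, true_and] at hx
    exact hcon x hx.1 hc hx.2
  have hnotu0 : ∀ x ∈ A, ¬ inBox x u0 := by
    intro x hx hxb
    simp only [hA, mem_filter] at hx
    have hodd := hx.2
    have hne : (univ.filter (fun i : Fin n => i.val < k ∧ x i = true)).Nonempty := by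
      rw [← Finset.card_pos]
      rcases hodd with ⟨m, hm⟩; omega
    obtain ⟨i, hi⟩ := hne
    simp only [mem_filter, mem_univ, true_and] at hi
    have hb := hxb i false (by simp [hu0, hi.1])
    rw [hi.2] at hb
    exact Bool.true_eq_false.mp hb
  choose vv hvvV hvvx using hcov
  have hvne : ∀ x (hx : x ∈ A), vv x hx ≠ u0 := by
    intro x hx he
    exact hnotu0 x hx (he ▸ hvvx x hx)
  have hfree : ∀ v ∈ V, v ≠ u0 → ∃ j : Fin n, j.val < k ∧ v j = none :=
    fun v hv hne => free_coord h hu hv hne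
  choose jj hjjk hjjnone using hfree
  -- the injection from A into E.erase p
  have key : A.attach.card ≤ (E.erase p).card := by
    refine Finset.card_le_card_of_injOn
      (fun a => Function.update a.1 (jj (vv a.1 a.2) (hvvV a.1 a.2) (hvne a.1 a.2))
        (!a.1 (jj (vv a.1 a.2) (hvvV a.1 a.2) (hvne a.1 a.2)))) ?_ ?_
    · intro a _
      have hfbox : inBox (Function.update a.1 (jj (vv a.1 a.2) (hvvV a.1 a.2) (hvne a.1 a.2))
          (!a.1 (jj (vv a.1 a.2) (hvvV a.1 a.2) (hvne a.1 a.2)))) (vv a.1 a.2) := by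
        intro i b hb
        have hij : i ≠ jj (vv a.1 a.2) (hvvV a.1 a.2) (hvne a.1 a.2) := by
          intro e
          rw [e, hjjnone (vv a.1 a.2) (hvvV a.1 a.2) (hvne a.1 a.2)] at hb
          exact Option.some_ne_none b hb.symm
        rw [Function.update_of_ne hij]
        exact hvvx a.1 a.2 i b hb
      have ha := a.2
      simp only [hA, mem_filter] at ha
      rw [Finset.mem_coe, Finset.mem_erase]
      constructor
      · intro hfp
        exact box_disjoint h (hvvV a.1 a.2) hu (hvne a.1 a.2) (hfp ▸ hfbox) hpbox
      · simp only [hE, mem_filter]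
        refine ⟨hflipS a.1 _ (hjjk _ _ _) ha.1, ?_⟩
        intro ho
        exact (parity_flip (k := k) a.1 _ (hjjk _ _ _)).mp ho ha.2
    · intro a _ b _ hab
      dsimp only at hab
      have hfboxa : inBox (Function.update a.1 (jj (vv a.1 a.2) (hvvV a.1 a.2) (hvne a.1 a.2))
          (!a.1 (jj (vv a.1 a.2) (hvvV a.1 a.2) (hvne a.1 a.2)))) (vv a.1 a.2) := by
        intro i c hc
        have hij : i ≠ jj (vv a.1 a.2) (hvvV a.1 a.2) (hvne a.1 a.2) := by
          intro e
          rw [e, hjjnone (vv a.1 a.2) (hvvV a.1 a.2) (hvne a.1 a.2)] at hc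
          exact Option.some_ne_none c hc.symm
        rw [Function.update_of_ne hij]
        exact hvvx a.1 a.2 i c hc
      have hfboxb : inBox (Function.update b.1 (jj (vv b.1 b.2) (hvvV b.1 b.2) (hvne b.1 b.2))
          (!b.1 (jj (vv b.1 b.2) (hvvV b.1 b.2) (hvne b.1 b.2)))) (vv b.1 b.2) := by
        intro i c hc
        have hij : i ≠ jj (vv b.1 b.2) (hvvV b.1 b.2) (hvne b.1 b.2) := by
          intro e
          rw [e, hjjnone (vv b.1 b.2) (hvvV b.1 b.2) (hvne b.1 b.2)] at hc
          exact Option.some_ne_none c hc.symm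
        rw [Function.update_of_ne hij]
        exact hvvx b.1 b.2 i c hc
    -- the chosen words must coincide
      have hveq : vv a.1 a.2 = vv b.1 b.2 := by
        by_contra hvne'
        exact box_disjoint h (hvvV a.1 a.2) (hvvV b.1 b.2) hvne'
          (hab ▸ hfboxa) hfboxb
      have hjeq : jj (vv a.1 a.2) (hvvV a.1 a.2) (hvne a.1 a.2)
          = jj (vv b.1 b.2) (hvvV b.1 b.2) (hvne b.1 b.2) := by
        congr 1
      set j := jj (vv a.1 a.2) (hvvV a.1 a.2) (hvne a.1 a.2) with hjdef
      rw [← hjeq] at hab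
      have hfun : a.1 = b.1 := by
        funext i
        by_cases hij : i = j
        · rw [hij]
          have := congrFun hab j
          simp only [Function.update_self] at this
          exact Bool.not_inj this
        · have := congrFun hab i
          rw [Function.update_of_ne hij, Function.update_of_ne hij] at this
          exact this
      exact Subtype.ext hfun
  rw [Finset.card_attach, Finset.card_erase_of_mem hpE] at key
  have hEpos : 1 ≤ E.card := Finset.card_pos.mpr ⟨p, hpE⟩
  omega
end
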